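/- C₂(C₃(C₄(2))) > ack 4 (ack 4 254) (the paper's computation C̃₂₅(2) > F₄(F₄(254))). -/

import Mathlib

def C0 (m : ℕ) : ℕ := 2 ^ m
def C1 (m : ℕ) : ℕ := 2 ^ m

def C2 : ℕ → ℕ
  | 0 => 0
  | m + 1 => C2 m + 2 ^ (C2 m)

def C3 (m : ℕ) : ℕ := 2 ^ m

def C4 : ℕ → ℕ
  | 0 => 0
  | 1 => 8
  | m + 2 => C4 (m + 1) + C1 (C2 (C3 (C4 (m + 1)))) - 1

def C5 : ℕ → ℕ
  | 0 => 0
  | 1 => 2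
  | m + 2 => C5 (m + 1) + C3 (C4 (C5 (m + 1)))

def C6 (m : ℕ) : ℕ := 2 ^ m

def C7 : ℕ → ℕ
  | 0 => 0
  | m + 1 => C7 m + C1 (C2 (C3 (C4 (C5 (C6 (C7 m)))))) - 8

def C8 (m : ℕ) : ℕ := 2 ^ m

def H (n : ℕ) : ℕ := C1 (C2 (C3 (C4 (C5 n))))
def G (n : ℕ) : ℕ := C1 (C2 (C3 (C4 (C5 (C6 (C7 (C8 n)))))))

def C9 : ℕ → ℕ
  | 0 => 0
  | 1 => G (H 1 - 8) - 8
  | m + 2 => C9 (m + 1) + G (C9 (m + 1)) - H 1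

def C10 : ℕ → ℕ
  | 0 => 0
  | m + 1 => C10 m + C3 (C4 (C5 (C6 (C7 (C8 (C9 (C10 m)))))))


def twr : ℕ → ℕ
  | 0 => 0
  | n + 1 => 2 ^ twr n

lemma twr_succ (n : ℕ) : twr (n + 1) = 2 ^ twr n := rfl

lemma twr_strictMono : StrictMono twr := by
  apply strictMono_nat_of_lt_succ
  intro n
  rw [twr_succ]
  exact Nat.lt_two_pow_self (n := _)

lemma twr_mono : Monotone twr := twr_strictMono.monotone

lemma one_le_twr_succ (n : ℕ) : 1 ≤ twr (n + 1) := by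
  rw [twr_succ]; exact Nat.one_le_two_pow

lemma twr_le_C2 (n : ℕ) : twr n ≤ C2 n := by
  induction n with
  | zero => simp [twr, C2]
  | succ n ih =>
    rw [twr_succ]
    show 2 ^ twr n ≤ C2 n + 2 ^ C2 n
    calc 2 ^ twr n ≤ 2 ^ C2 n := Nat.pow_le_pow_right (by norm_num) ih
    _ ≤ C2 n + 2 ^ C2 n := Nat.le_add_left _ _

lemma ack4_le_twr (m : ℕ) : ack 4 m + 3 ≤ twr (m + 4) := by
  induction m with
  | zero =>
    have h : ack 4 0 = 13 := by rw [ack_succ_zero, ack_three]; norm_num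
    rw [h]
    decide
  | succ m ih =>
    have h1 : ack 4 (m + 1) = 2 ^ (ack 4 m + 3) - 3 := by
      rw [ack_succ_succ, ack_three]
    have h2 : 3 ≤ 2 ^ (ack 4 m + 3) :=
      le_trans (by norm_num) (Nat.pow_le_pow_right (by norm_num) (Nat.le_add_left 3 _))
    have h3 : ack 4 (m + 1) + 3 = 2 ^ (ack 4 m + 3) := by omega
    have h4 : m + 1 + 4 = (m + 4) + 1 := by omega
    rw [h3, h4, twr_succ]
    exact Nat.pow_le_pow_right (by norm_num) ih

lemma C4ss (m : ℕ) : C4 (m + 2) = C4 (m + 1) + C1 (C2 (C3 (C4 (m + 1)))) - 1 := rfl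

lemma C1_eq (m : ℕ) : C1 m = 2 ^ m := rfl
lemma C3_eq (m : ℕ) : C3 m = 2 ^ m := rfl

lemma C4twoA : C4 2 = C4 1 + C1 (C2 (C3 (C4 1))) - 1 := by
  have h := C4ss 0
  simp only [Nat.zero_add] at h
  exact h

lemma C4one : C4 1 = 8 := rfl

lemma C4two : C4 2 = 8 + 2 ^ C2 (2 ^ 8) - 1 := by
  rw [C4twoA, C4one, C1_eq, C3_eq]

/-- symbolic lower bound for `2 ^ (C4 2)` -/
lemma main_lower (n x : ℕ) (hx : twr n ≤ x) :
    twr (n + 2) + 2 ≤ 2 ^ (8 + 2 ^ x - 1) := by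
  have h1 : twr (n + 1) + 1 ≤ 8 + 2 ^ x - 1 := by
    have : twr (n + 1) ≤ 2 ^ x := by
      rw [twr_succ]
      exact Nat.pow_le_pow_right (by norm_num) hx
    have h8 : (1:ℕ) ≤ 2 ^ x := Nat.one_le_two_pow
    omega
  have h2 : twr (n + 2) + 2 ≤ 2 ^ (twr (n + 1) + 1) := by
    have e : twr (n + 2) = 2 ^ twr (n + 1) := twr_succ (n + 1)
    have h1t : 1 ≤ twr (n + 1) := one_le_twr_succ n
    have h2t : 2 ≤ 2 ^ twr (n + 1) := by
      calc (2:ℕ) = 2 ^ 1 := rfl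
      _ ≤ 2 ^ twr (n + 1) := Nat.pow_le_pow_right (by norm_num) h1t
    rw [e, pow_succ]
    omega
  exact le_trans h2 (Nat.pow_le_pow_right (by norm_num) h1)

lemma lt_of_add_three_le {a b : ℕ} (h : a + 3 ≤ b) : a < b := by omega
lemma aux_add {a b : ℕ} (h : a + 3 ≤ b) : a + 4 ≤ b + 1 := by omega
lemma aux_add2 {a b : ℕ} (h : a + 2 ≤ b) : a + 1 ≤ b := by omega

theorem stmt_11 : C2 (C3 (C4 2)) > ack 4 (ack 4 254) := by
  -- lower bound on C3 (C4 2)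
  have hN : twr (2 ^ 8 + 2) + 2 ≤ C3 (C4 2) := by
    rw [C3_eq, C4two]
    exact main_lower (2 ^ 8) (C2 (2 ^ 8)) (twr_le_C2 (2 ^ 8))
  -- upper bounds via ack
  have h1 : ack 4 254 + 3 ≤ twr (2 ^ 8 + 2) :=
    le_trans (ack4_le_twr 254) (twr_mono (by norm_num))
  have hA : ack 4 (ack 4 254) + 3 ≤ twr (twr (2 ^ 8 + 2) + 1) :=
    le_trans (ack4_le_twr (ack 4 254)) (twr_mono (aux_add h1))
  have step1 : ack 4 (ack 4 254) < twr (twr (2 ^ 8 + 2) + 1) := lt_of_add_three_le hA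
  have step2 : twr (twr (2 ^ 8 + 2) + 1) ≤ twr (C3 (C4 2)) := twr_mono (aux_add2 hN)
  exact lt_of_lt_of_le step1 (le_trans step2 (twr_le_C2 (C3 (C4 2))))
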